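/- arXiv:2202.09902 — 4 statements merged into one kernel-verified Lean document; each statement's English description precedes it below -/
import Mathlib

section
/- Suppose λ is a successor cardinal, say λ = ν⁺. Then no λ-complete uniform filter on λ is weakly λ-saturated; that is, for every λ-complete uniform filter F on λ there is a function ψ : λ → λ all of whose fibers are F-positive. -/
open Cardinal Set

/-- A set (of a `Type 1`, such as sets of ordinals or families of such sets)
has cardinality exactly the (small) cardinal `κ`. -/
def cardEq {X : Type 1} (s : Set X) (κ : Cardinal.{0}) : Prop :=
  #s = Cardinal.lift.{1} κ

/-- A set has cardinality at most `κ`. -/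
def cardLE {X : Type 1} (s : Set X) (κ : Cardinal.{0}) : Prop :=
  #s ≤ Cardinal.lift.{1} κ

/-- A set has cardinality less than `κ`. -/
def cardLT {X : Type 1} (s : Set X) (κ : Cardinal.{0}) : Prop :=
  #s < Cardinal.lift.{1} κ



/-- The set of ordinals `a` has order type (exactly) the ordinal `σ`. -/
def otpEq (a : Set Ordinal) (σ : Ordinal.{0}) : Prop :=
  Ordinal.type ((· < ·) : a → a → Prop) = Ordinal.lift.{1} σ

/-- `a < b` elementwise: every element of `a` is below every element of `b`. -/
def setBelow (a b : Set Ordinal) : Prop := ∀ x ∈ a, ∀ y ∈ b, x < y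

/-- `c[a × b] = {τ}`: the coloring `c` is constantly `τ` on `a × b`. -/
def constOn (c : Ordinal → Ordinal → Ordinal) (a b : Set Ordinal) (τ : Ordinal) : Prop :=
  Set.image2 c a b = {τ}

/-- `𝒜` is a `κ`-sized pairwise disjoint subfamily of `[κ]^σ`. -/
def KappaFam (κ : Cardinal.{0}) (σ : Ordinal) (𝒜 : Set (Set Ordinal)) : Prop :=
  (∀ a ∈ 𝒜, a ⊆ Set.Iio κ.ord ∧ otpEq a σ) ∧ 𝒜.PairwiseDisjoint id ∧ cardEq 𝒜 κ

/-- `c` witnesses `Pr₁(κ, κ, θ, χ)`. -/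
def IsPr1 (κ θ χ : Cardinal.{0}) (c : Ordinal → Ordinal → Ordinal) : Prop :=
  ∀ σ < χ.ord, ∀ 𝒜 : Set (Set Ordinal), KappaFam κ σ 𝒜 →
    ∀ ξ < θ.ord, ∃ a ∈ 𝒜, ∃ b ∈ 𝒜, setBelow a b ∧ constOn c a b ξ

/-- `Pr₁(κ, κ, θ, χ)`. -/
def Pr1 (κ θ χ : Cardinal.{0}) : Prop :=
  ∃ c : Ordinal → Ordinal → Ordinal,
    (∀ α β : Ordinal, α < β → β < κ.ord → c α β < θ.ord) ∧ IsPr1 κ θ χ c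

/-- `c` witnesses `U₁(κ, 2, θ, χ)`. -/
def IsU1 (κ θ χ : Cardinal.{0}) (c : Ordinal → Ordinal → Ordinal) : Prop :=
  ∀ σ < χ.ord, ∀ 𝒜 : Set (Set Ordinal), KappaFam κ σ 𝒜 →
    ∀ ε < θ.ord, ∃ a ∈ 𝒜, ∃ b ∈ 𝒜, setBelow a b ∧
      ∃ τ, ε < τ ∧ τ < θ.ord ∧ constOn c a b τ

/-- `U₁(κ, 2, θ, χ)`. -/
def U1 (κ θ χ : Cardinal.{0}) : Prop :=
  ∃ c : Ordinal → Ordinal → Ordinal,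
    (∀ α β : Ordinal, α < β → β < κ.ord → c α β < θ.ord) ∧ IsU1 κ θ χ c

/-- `c` witnesses `U(κ, μ, θ, χ)`. -/
def IsU (κ μ θ χ : Cardinal.{0}) (c : Ordinal → Ordinal → Ordinal) : Prop :=
  ∀ σ < χ.ord, ∀ 𝒜 : Set (Set Ordinal), KappaFam κ σ 𝒜 →
    ∀ τ < θ.ord, ∃ ℬ ⊆ 𝒜, cardEq ℬ μ ∧
      ∀ a ∈ ℬ, ∀ b ∈ ℬ, setBelow a b → ∀ z ∈ Set.image2 c a b, τ ≤ z

/-- `𝒜 ∈ 𝔸^κ_χ`: a pairwise disjoint family of `κ` many (nonempty) subsets of `κ`,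
with the supremum of the cardinalities of its members below `χ`. -/
def AFam (κ χ : Cardinal.{0}) (𝒜 : Set (Set Ordinal)) : Prop :=
  (∀ a ∈ 𝒜, a ⊆ Set.Iio κ.ord ∧ a.Nonempty) ∧ 𝒜.PairwiseDisjoint id ∧ cardEq 𝒜 κ ∧
    ∃ ν < χ, ∀ a ∈ 𝒜, cardLE a ν

/-- `T_c(𝒜)`: the set of `τ < θ` so that `c[a × b] = {τ}` for some `a < b` from `𝒜`. -/
def Tc (θ : Cardinal.{0}) (c : Ordinal → Ordinal → Ordinal) (𝒜 : Set (Set Ordinal)) :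
    Set Ordinal :=
  {τ | τ < θ.ord ∧ ∃ a ∈ 𝒜, ∃ b ∈ 𝒜, setBelow a b ∧ constOn c a b τ}

/-- The collection `F_{c,χ}` of subsets of `θ` containing some `T_c(𝒜)`, `𝒜 ∈ 𝔸^κ_χ`. -/
def Fc (κ θ χ : Cardinal.{0}) (c : Ordinal → Ordinal → Ordinal) : Set (Set Ordinal) :=
  {T | T ⊆ Set.Iio θ.ord ∧ ∃ 𝒜 : Set (Set Ordinal), AFam κ χ 𝒜 ∧ Tc θ c 𝒜 ⊆ T}

/-- `F` is a (proper) `χ`-complete filter on `θ`. -/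
def IsNiceFilter (θ χ : Cardinal.{0}) (F : Set (Set Ordinal)) : Prop :=
  (∀ T ∈ F, T ⊆ Set.Iio θ.ord) ∧ Set.Iio θ.ord ∈ F ∧ ∅ ∉ F ∧
    (∀ S ∈ F, ∀ T, S ⊆ T → T ⊆ Set.Iio θ.ord → T ∈ F) ∧
    (∀ I : Set (Set Ordinal), I ⊆ F → I.Nonempty → cardLT I χ → ⋂₀ I ∈ F)

/-- `F` is a `χ`-complete uniform filter on `θ`. -/
def IsUniformFilter (θ χ : Cardinal.{0}) (F : Set (Set Ordinal)) : Prop :=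
  IsNiceFilter θ χ F ∧ ∀ T ∈ F, cardEq T θ

/-- `X` is `F`-positive. -/
def FPos (F : Set (Set Ordinal)) (X : Set Ordinal) : Prop :=
  ∀ T ∈ F, (X ∩ T).Nonempty
/-- If `λ = ν⁺` is a successor cardinal, then no `λ`-complete uniform filter on
`λ` is weakly `λ`-saturated: every such filter admits `ψ : λ → λ` all of whose
fibers are positive. -/
theorem stmt11 (ν lam : Cardinal) (hν : Cardinal.aleph 0 ≤ ν)
    (hlam : lam = Order.succ ν) :
    ∀ F : Set (Set Ordinal), IsUniformFilter lam lam F →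
      ∃ ψ : Ordinal → Ordinal, (∀ τ < lam.ord, ψ τ < lam.ord) ∧
        ∀ ξ < lam.ord, FPos F {τ | τ < lam.ord ∧ ψ τ = ξ} := by
  intro F hF
  classical
  rw [Cardinal.aleph_zero] at hν
  set L := lam.ord with hLdef
  have hνlam : ν < lam := hlam ▸ Order.lt_succ ν
  have hlaminf : ℵ₀ ≤ lam := hν.trans hνlam.le
  have hmkIio : ∀ c : Cardinal.{0}, #(Set.Iio c.ord) = Cardinal.lift.{1} c := by
    intro c; rw [Ordinal.mk_Iio_ordinal, Cardinal.card_ord]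
  have hNpos : (0 : Ordinal) < ν.ord := by
    have := Cardinal.ord_le_ord.mpr hν
    rw [Cardinal.ord_aleph0] at this
    exact lt_of_lt_of_le Ordinal.omega0_pos this
  have hLlim : Order.IsSuccLimit L := Cardinal.isSuccLimit_ord hlaminf
  have hLpos : (0 : Ordinal) < L := hLlim.pos
  -- Step 1: injections into ν.ord
  have hinj : ∀ β : Ordinal, ∃ g : Ordinal → Ordinal, β < L →
      ((∀ ξ < β, g ξ < ν.ord) ∧ ∀ ξ < β, ∀ ξ' < β, ξ ≠ ξ' → g ξ ≠ g ξ') := by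
    intro β
    by_cases hβ : β < L
    · have hcard : β.card ≤ ν := by
        have := Cardinal.lt_ord.mp hβ
        rw [hlam] at this
        exact Order.lt_succ_iff.mp this
      have hle : #(Set.Iio β) ≤ #(Set.Iio ν.ord) := by
        rw [Ordinal.mk_Iio_ordinal, hmkIio]
        exact Cardinal.lift_le.mpr hcard
      obtain ⟨e⟩ := Cardinal.le_def _ _ |>.mp hle
      refine ⟨fun ξ => if h : ξ < β then (e ⟨ξ, h⟩ : Ordinal) else 0, fun _ => ⟨?_, ?_⟩⟩
      · intro ξ hξ; simp only [dif_pos hξ]; exact (e ⟨ξ, hξ⟩).2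
      · intro ξ hξ ξ' hξ' hne
        simp only [dif_pos hξ, dif_pos hξ']
        intro heq
        exact hne (congrArg Subtype.val (e.injective (Subtype.ext heq)))
    · exact ⟨fun _ => 0, fun h => absurd h hβ⟩
  choose f hf using hinj
  set A : Ordinal → Ordinal → Set Ordinal :=
    fun η ξ => {β | β < L ∧ ξ < β ∧ f β ξ = η} with hA
  have memA : ∀ η ξ β, β ∈ A η ξ ↔ (β < L ∧ ξ < β ∧ f β ξ = η) := by
    intro η ξ β; rw [hA]; rfl
  -- Step 3: for each ξ < L some column entry is positive
  have pos : ∀ ξ < L, ∃ η < ν.ord, FPos F (A η ξ) := by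
    intro ξ hξ
    by_contra hc
    push_neg at hc
    have hTex : ∀ η : Ordinal, ∃ T, η < ν.ord → T ∈ F ∧ A η ξ ∩ T = ∅ := by
      intro η
      by_cases hη : η < ν.ord
      · have := hc η hη
        unfold FPos at this
        push_neg at this
        obtain ⟨T, hTF, hTne⟩ := this
        exact ⟨T, fun _ => ⟨hTF, hTne⟩⟩
      · exact ⟨∅, fun h => absurd h hη⟩
    choose T hT using hTex
    set I : Set (Set Ordinal) := T '' (Set.Iio ν.ord) with hI
    have hIF : I ⊆ F := by
      rintro _ ⟨η, hη, rfl⟩; exact (hT η hη).1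
    have hIne : I.Nonempty := ⟨T 0, 0, hNpos, rfl⟩
    have hIcard : #I < Cardinal.lift.{1} lam := by
      calc #I ≤ #(Set.Iio ν.ord) := Cardinal.mk_image_le
        _ = Cardinal.lift.{1} ν := hmkIio ν
        _ < Cardinal.lift.{1} lam := Cardinal.lift_lt.mpr hνlam
    have hWF : ⋂₀ I ∈ F := hF.1.2.2.2.2 I hIF hIne hIcard
    have hWcard : #(⋂₀ I) = Cardinal.lift.{1} lam := hF.2 _ hWF
    have hWsub : ⋂₀ I ⊆ Set.Iio (Order.succ ξ) := by
      intro β hβ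
      have hβL : β < L := hF.1.1 _ hWF hβ
      by_contra hβξ
      have hβξ' : ¬ β < Order.succ ξ := hβξ
      have hξβ : ξ < β := Order.succ_le_iff.mp (not_lt.mp hβξ')
      have hfβ : f β ξ < ν.ord := (hf β hβL).1 ξ hξβ
      have hβA : β ∈ A (f β ξ) ξ := (memA _ _ _).mpr ⟨hβL, hξβ, rfl⟩
      have hβT : β ∈ T (f β ξ) := hβ _ ⟨f β ξ, hfβ, rfl⟩
      have := (hT (f β ξ) hfβ).2
      exact absurd this (Set.nonempty_iff_ne_empty.mp ⟨β, hβA, hβT⟩)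
    have hlt : #(⋂₀ I) < Cardinal.lift.{1} lam := by
      calc #(⋂₀ I) ≤ #(Set.Iio (Order.succ ξ)) := Cardinal.mk_le_mk_of_subset hWsub
        _ = Cardinal.lift.{1} (Order.succ ξ).card := Ordinal.mk_Iio_ordinal _
        _ < Cardinal.lift.{1} lam := by
            exact Cardinal.lift_lt.mpr (Cardinal.lt_ord.mp (hLlim.succ_lt hξ))
    exact absurd hWcard hlt.ne
  -- Step 4: choose a row index for each column
  have hηex : ∀ ξ : Ordinal, ∃ η, ξ < L → η < ν.ord ∧ FPos F (A η ξ) := by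
    intro ξ
    by_cases hξ : ξ < L
    · obtain ⟨η, h1, h2⟩ := pos ξ hξ
      exact ⟨η, fun _ => ⟨h1, h2⟩⟩
    · exact ⟨0, fun h => absurd h hξ⟩
  choose η hη using hηex
  -- Step 5: a big fiber of η
  set Fib : Ordinal → Set Ordinal := fun η0 => {ξ | ξ < L ∧ η ξ = η0} with hFib
  have hbig : ∃ η0, ¬ #(Fib η0) ≤ Cardinal.lift.{1} ν := by
    by_contra hc
    push_neg at hc
    have hsub : Set.Iio L ⊆ ⋃ i : Set.Iio ν.ord, Fib i := by
      intro ξ hξ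
      exact Set.mem_iUnion.mpr ⟨⟨η ξ, (hη ξ hξ).1⟩, hξ, rfl⟩
    have : Cardinal.lift.{1} lam ≤ Cardinal.lift.{1} ν := by
      calc Cardinal.lift.{1} lam = #(Set.Iio L) := (hmkIio lam).symm
        _ ≤ #(⋃ i : Set.Iio ν.ord, Fib i) := Cardinal.mk_le_mk_of_subset hsub
        _ ≤ #(Set.Iio ν.ord) * ⨆ i : Set.Iio ν.ord, #(Fib i) := Cardinal.mk_iUnion_le _
        _ ≤ Cardinal.lift.{1} ν * Cardinal.lift.{1} ν := by
            refine mul_le_mul' (le_of_eq (hmkIio ν)) (ciSup_le' fun i => hc i)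
        _ = Cardinal.lift.{1} ν := Cardinal.mul_eq_self (Cardinal.aleph0_le_lift.mpr hν)
    exact absurd hνlam (not_lt.mpr (Cardinal.lift_le.mp this))
  obtain ⟨η0, hη0⟩ := hbig
  have hScard : #(Fib η0) = Cardinal.lift.{1} lam := by
    have hle : #(Fib η0) ≤ Cardinal.lift.{1} lam := by
      have : Fib η0 ⊆ Set.Iio L := fun ξ hξ => hξ.1
      calc #(Fib η0) ≤ #(Set.Iio L) := Cardinal.mk_le_mk_of_subset this
        _ = Cardinal.lift.{1} lam := hmkIio lam
    have hge : Cardinal.lift.{1} lam ≤ #(Fib η0) := by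
      rw [hlam, Cardinal.lift_succ]
      exact Order.succ_le_of_lt (not_le.mp hη0)
    exact le_antisymm hle hge
  have hequiv : Nonempty (Set.Iio L ≃ Fib η0) := by
    rw [← Cardinal.eq]
    rw [hmkIio lam, hScard]
  obtain ⟨e⟩ := hequiv
  -- disjointness
  have disj : ∀ ξ1 ξ2 β, β ∈ A η0 ξ1 → β ∈ A η0 ξ2 → ξ1 = ξ2 := by
    intro ξ1 ξ2 β h1 h2
    rw [memA] at h1 h2
    by_contra hne
    exact (hf β h1.1).2 ξ1 h1.2.1 ξ2 h2.2.1 hne (h1.2.2.trans h2.2.2.symm)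
  -- define ψ
    -- ψ β = index ζ < L such that β ∈ A η0 (e ζ), if any
  refine ⟨fun β => if h : ∃ ζ : Set.Iio L, β ∈ A η0 ((e ζ : Ordinal)) then
      ((h.choose : Set.Iio L) : Ordinal) else 0, ?_, ?_⟩
  · intro τ _
    by_cases h : ∃ ζ : Set.Iio L, τ ∈ A η0 ((e ζ : Ordinal))
    · simp only [dif_pos h]; exact h.choose.2
    · simp only [dif_neg h]; exact hLpos
  · intro ξ hξ
    set ζ : Set.Iio L := ⟨ξ, hξ⟩ with hζ
    have hs : ((e ζ : Ordinal)) < L ∧ η ((e ζ : Ordinal)) = η0 := (e ζ).2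
    have hsL : ((e ζ : Ordinal)) < L := hs.1
    have hpos : FPos F (A η0 ((e ζ : Ordinal))) := by
      have := (hη _ hsL).2
      rwa [hs.2] at this
    intro T hTF
    obtain ⟨β, hβA, hβT⟩ := hpos T hTF
    refine ⟨β, ⟨?_, ?_⟩, hβT⟩
    · exact ((memA _ _ _).mp hβA).1
    · have h : ∃ ζ' : Set.Iio L, β ∈ A η0 ((e ζ' : Ordinal)) := ⟨ζ, hβA⟩
      simp only [dif_pos h]
      have hspec := h.choose_spec
      have : ((e h.choose : Ordinal)) = ((e ζ : Ordinal)) := disj _ _ β hspec hβA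
      have : h.choose = ζ := e.injective (Subtype.ext this)
      rw [this]
end

section
/- Let λ be a regular uncountable cardinal, and let ⟨𝒞_α : α < λ⁺⟩ be a □(λ⁺,<λ)-sequence with each 𝒞_α enumerated injectively as ⟨C_{α,i} : i < |𝒞_α|⟩. Suppose A' ⊆ λ⁺ is cofinal and i < λ is such that for all α < β in A', C_{α,i} = C_{β,i} ∩ α. Then C := ⋃{C_{α,i} : α ∈ A'} is a club in λ⁺ with C ∩ α ∈ 𝒞_α for every α ∈ acc(C), contradicting clause (3) of the definition; hence no such A' and i exist. -/
open Cardinal Set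

/-- The walk `Tr(α,β) : ω → κ` along the `C`-sequence `C`:
`Tr(α,β)(0) = β`; `Tr(α,β)(n+1) = min(C_{Tr(α,β)(n)} \ α)` as long as the previous
step is above `α`, and `α` from then on. -/
noncomputable def TrW (C : Ordinal → Set Ordinal) (α β : Ordinal) : ℕ → Ordinal
  | 0 => β
  | n + 1 => if α < TrW C α β n then sInf (C (TrW C α β n) ∩ Set.Ici α) else α

/-- `ρ₂(α,β)`: the length of the walk from `β` down to `α`. -/
noncomputable def rho2 (C : Ordinal → Set Ordinal) (α β : Ordinal) : ℕ :=
  sInf {n : ℕ | TrW C α β n = α}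

/-- The image of `tr(α,β) = Tr(α,β) ↾ ρ₂(α,β)`. -/
noncomputable def trIm (C : Ordinal → Set Ordinal) (α β : Ordinal) : Set Ordinal :=
  (fun n => TrW C α β n) '' {n : ℕ | n < rho2 C α β}

/-- `λ(α,β) := max{sup(C_{Tr(α,β)(i)} ∩ α) : i < ρ₂(α,β)}`. -/
noncomputable def lamW (C : Ordinal → Set Ordinal) (α β : Ordinal) : Ordinal :=
  sSup {x | ∃ n < rho2 C α β, x = sSup (C (TrW C α β n) ∩ Set.Iio α)}

/-- `λ₂(α,β) := sup(α ∩ {sup(C_δ ∩ α) : δ ∈ im(tr(α,β))})`. -/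
noncomputable def lam2 (C : Ordinal → Set Ordinal) (α β : Ordinal) : Ordinal :=
  sSup (Set.Iio α ∩ {x | ∃ δ ∈ trIm C α β, x = sSup (C δ ∩ Set.Iio α)})

/-- `acc(s) := {δ ∈ s : sup(s ∩ δ) = δ > 0}`. -/
def accSet (s : Set Ordinal) : Set Ordinal := {δ ∈ s | 0 < δ ∧ sSup (s ∩ Set.Iio δ) = δ}

/-- `C` is a `C`-sequence over `κ`: each `C α` is a closed subset of `α`
with `sup (C α) = sup α`. -/
def IsCSeq (κo : Ordinal) (C : Ordinal → Set Ordinal) : Prop :=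
  ∀ α < κo, (∀ x ∈ C α, x < α) ∧ sSup (C α) = sSup (Set.Iio α) ∧
    ∀ δ < α, 0 < δ → sSup (C α ∩ Set.Iio δ) = δ → δ ∈ C α

/-- `D` is a club in (the ordinal) `κ`: an unbounded subset of `κ` closed below `κ`. -/
def IsClubIn (κo : Ordinal) (D : Set Ordinal) : Prop :=
  (∀ x ∈ D, x < κo) ∧ (∀ x < κo, ∃ y ∈ D, x < y) ∧
    ∀ δ < κo, 0 < δ → sSup (D ∩ Set.Iio δ) = δ → δ ∈ D

/-- `S` is stationary in `κ`: it meets every club in `κ`. -/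
def IsStat (κo : Ordinal) (S : Set Ordinal) : Prop :=
  ∀ D : Set Ordinal, IsClubIn κo D → (S ∩ D).Nonempty

/-- `acc⁺(A) := {α : sup(A ∩ α) = α > 0}`. -/
def accPlus (A : Set Ordinal) : Set Ordinal := {α | 0 < α ∧ sSup (A ∩ Set.Iio α) = α}

/-- Given a `□(λ⁺,<λ)`-sequence `⟨𝒞_α : α < λ⁺⟩` enumerated as `⟨C_{α,i}⟩`,
there are no cofinal `A' ⊆ λ⁺` and `i < λ` such that `C_{α,i} = C_{β,i} ∩ α` for
all `α < β` from `A'` (else `⋃{C_{α,i} : α ∈ A'}` would be a club threading the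
sequence, contradicting clause (3)). -/
theorem stmt13 (lam : Cardinal.{0}) (hlam : lam.IsRegular)
    (huncb : Cardinal.aleph 0 < lam)
    (𝒞 : Ordinal → Set (Set Ordinal)) (C : Ordinal → Ordinal → Set Ordinal)
    (h1 : ∀ α < (Order.succ lam).ord, (𝒞 α).Nonempty ∧ cardLT (𝒞 α) lam ∧
      ∀ D ∈ 𝒞 α, (∀ x ∈ D, x < α) ∧ sSup D = sSup (Set.Iio α) ∧
        ∀ δ < α, 0 < δ → sSup (D ∩ Set.Iio δ) = δ → δ ∈ D)
    (h2 : ∀ α < (Order.succ lam).ord, ∀ D ∈ 𝒞 α, ∀ δ ∈ accSet D,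
      D ∩ Set.Iio δ ∈ 𝒞 δ)
    (h3 : ¬ ∃ Cl : Set Ordinal, IsClubIn (Order.succ lam).ord Cl ∧
      ∀ α ∈ accSet Cl, Cl ∩ Set.Iio α ∈ 𝒞 α)
    (henum : ∀ α < (Order.succ lam).ord, ∀ i < lam.ord, C α i ∈ 𝒞 α) :
    ¬ ∃ A' : Set Ordinal, ∃ i < lam.ord, A' ⊆ Set.Iio (Order.succ lam).ord ∧
      (∀ x < (Order.succ lam).ord, ∃ α ∈ A', x < α) ∧
      ∀ α ∈ A', ∀ β ∈ A', α < β → C α i = C β i ∩ Set.Iio α := by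
  
  rintro ⟨A', i, hi, hA'sub, hA'cof, hcoh⟩
  have hmem : ∀ α ∈ A', C α i ∈ 𝒞 α := fun α hα => henum α (hA'sub hα) i hi
  have hprop : ∀ α ∈ A', (∀ x ∈ C α i, x < α) ∧ sSup (C α i) = sSup (Set.Iio α) ∧
      ∀ δ < α, 0 < δ → sSup (C α i ∩ Set.Iio δ) = δ → δ ∈ C α i :=
    fun α hα => (h1 α (hA'sub hα)).2.2 _ (hmem α hα)
  set Cl : Set Ordinal := ⋃ α ∈ A', C α i with hCl
  have key : ∀ α ∈ A', ∀ δ : Ordinal, δ < α →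
      Cl ∩ Set.Iio δ = C α i ∩ Set.Iio δ := by
    intro α hα δ hδ
    ext x
    simp only [hCl, Set.mem_inter_iff, Set.mem_iUnion, Set.mem_Iio]
    constructor
    · rintro ⟨⟨β, hβ, hx⟩, hxδ⟩
      refine ⟨?_, hxδ⟩
      rcases lt_trichotomy β α with h | h | h
      · have := hcoh β hβ α hα h
        rw [this] at hx; exact hx.1
      · exact h ▸ hx
      · have := hcoh α hα β hβ h
        rw [this]; exact ⟨hx, hxδ.trans hδ⟩
    · rintro ⟨hx, hxδ⟩; exact ⟨⟨α, hα, hx⟩, hxδ⟩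
  apply h3
  refine ⟨Cl, ⟨?_, ?_, ?_⟩, ?_⟩
  · rintro x hx
    simp only [hCl, Set.mem_iUnion] at hx
    obtain ⟨α, hα, hx⟩ := hx
    exact ((hprop α hα).1 x hx).trans (hA'sub hα)
  · intro x hx
    obtain ⟨α, hα, hxα⟩ := hA'cof x hx
    obtain ⟨β, hβ, hαβ⟩ := hA'cof α (hA'sub hα)
    have hsup := (hprop β hβ).2.1
    have hxs : x < sSup (C β i) := by
      rw [hsup]
      exact lt_of_lt_of_le hxα
        (le_csSup ⟨β, fun y hy => le_of_lt hy⟩ hαβ)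
    have hne : (C β i).Nonempty := by
      by_contra h
      rw [Set.not_nonempty_iff_eq_empty] at h
      rw [h, csSup_empty] at hxs
      exact absurd hxs (not_lt_bot (a := x))
    obtain ⟨y, hy, hxy⟩ := exists_lt_of_lt_csSup hne hxs
    exact ⟨y, Set.mem_biUnion hβ hy, hxy⟩
  · intro δ hδ h0 hsup
    obtain ⟨α, hα, hδα⟩ := hA'cof δ hδ
    rw [key α hα δ hδα] at hsup
    exact Set.mem_biUnion hα ((hprop α hα).2.2 δ hδα h0 hsup)
  · rintro δ ⟨hδCl, h0, hsup⟩
    simp only [hCl, Set.mem_iUnion] at hδCl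
    obtain ⟨β, hβ, hδβ⟩ := hδCl
    have hδltβ : δ < β := (hprop β hβ).1 δ hδβ
    rw [key β hβ δ hδltβ] at hsup ⊢
    exact h2 β (hA'sub hβ) _ (hmem β hβ) δ ⟨hδβ, h0, hsup⟩
end

section
/- Let λ be a regular uncountable cardinal such that every λ-complete uniform filter on λ fails to be weakly λ-saturated. Then U₁(λ⁺,2,λ,λ) implies Pr₁(λ⁺,λ⁺,λ,λ). -/
open Cardinal Set

section Helpers
variable {lam : Cardinal.{0}}

lemma mk_Iio_ord (c : Cardinal.{0}) : #(Iio c.ord) = Cardinal.lift.{1} c := by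
  rw [Ordinal.mk_Iio_ordinal, Cardinal.card_ord]

lemma type_coe_Iio (o : Ordinal.{0}) :
    Ordinal.type ((· < ·) : Iio o → Iio o → Prop) = Ordinal.lift.{1} o := by
  rw [← Ordinal.typein_ordinal o]; rfl

lemma type_subset_le {a b : Set Ordinal.{0}} (h : a ⊆ b) :
    Ordinal.type ((· < ·) : a → a → Prop) ≤ Ordinal.type ((· < ·) : b → b → Prop) := by
  rw [Ordinal.type_le_iff']
  exact ⟨⟨⟨Set.inclusion h, Set.inclusion_injective h⟩, Iff.rfl⟩⟩

lemma mk_set_eq_card_type (a : Set Ordinal.{0}) :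
    (Ordinal.type ((· < ·) : a → a → Prop)).card = #a :=
  Ordinal.card_type _


lemma liftReg {lam : Cardinal.{0}} (h : lam.IsRegular) :
    (Cardinal.lift.{1} lam).IsRegular := by
  constructor
  · rw [aleph0_le_lift]; exact h.1
  · rw [← Cardinal.lift_ord, ← Ordinal.lift_cof]
    exact Cardinal.lift_le.2 h.2

lemma iSup_lt_of_small {ι : Type 1} {f : ι → Cardinal.{0}} {cc : Cardinal.{0}}
    (hc : cc.IsRegular) (hι : #ι < Cardinal.lift.{1} cc) (hf : ∀ i, f i < cc) :
    (⨆ i, f i) < cc := by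
  obtain ⟨μ, hμ⟩ := Cardinal.mem_range_lift_of_le hι.le
  have hμc : μ < cc := by rwa [← Cardinal.lift_lt.{0,1}, hμ]
  have hmk : #(ULift.{1} μ.out) = #ι := by rw [Cardinal.mk_uLift, Cardinal.mk_out, hμ]
  obtain ⟨g⟩ := Cardinal.eq.1 hmk
  have hs : (⨆ i, f i) = ⨆ b : μ.out, f (g ⟨b⟩) := by
    apply congrArg sSup
    have hsur : Function.Surjective (fun b : μ.out => g ⟨b⟩) :=
      fun i => ⟨(g.symm i).down, g.apply_symm_apply i⟩
    exact (hsur.range_comp f).symm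
  rw [hs]
  exact Cardinal.iSup_lt_of_isRegular hc (by rwa [Cardinal.mk_out]) (fun b => hf _)

/-- the singleton family witnessing nontriviality -/
lemma singleton_AFam (hlam : ℵ₀ ≤ lam) :
    AFam (Order.succ lam) lam ((fun α => ({α} : Set Ordinal)) '' Iio (Order.succ lam).ord) := by
  refine ⟨?_, ?_, ?_, 1, one_lt_aleph0.trans_le hlam, ?_⟩
  · rintro a ⟨α, hα, rfl⟩
    exact ⟨singleton_subset_iff.2 hα, ⟨α, rfl⟩⟩
  · rintro a ⟨α, hα, rfl⟩ b ⟨β, hβ, rfl⟩ hab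
    simp only [id] at *
    exact Set.disjoint_singleton.2 (fun h => hab (by rw [h]))
  · rw [cardEq, Cardinal.mk_image_eq_of_injOn _ _
      (fun x _ y _ h => Set.singleton_injective h), mk_Iio_ord]
  · rintro a ⟨α, hα, rfl⟩
    rw [cardLE, Cardinal.mk_singleton, Cardinal.lift_one]

lemma kappaFam_AFam (hlam : ℵ₀ ≤ lam) {σ : Ordinal.{0}} (hσ : σ < lam.ord)
    {𝒜 : Set (Set Ordinal)} (hA : KappaFam (Order.succ lam) σ 𝒜) :
    AFam (Order.succ lam) lam 𝒜 := by
  obtain ⟨h1, h2, h3⟩ := hA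
  have hσ0 : σ ≠ 0 := by
    rintro rfl
    have hsub : 𝒜 ⊆ {(∅ : Set Ordinal)} := by
      intro a ha
      have := (h1 a ha).2
      rw [otpEq, Ordinal.lift_zero, Ordinal.type_eq_zero_iff_isEmpty] at this
      simp only [mem_singleton_iff]
      exact Set.isEmpty_coe_sort.1 this
    have hle : #𝒜 ≤ 1 := by
      simpa using Cardinal.mk_le_mk_of_subset hsub
    rw [h3] at hle
    have : Order.succ lam ≤ 1 := by
      rwa [← Cardinal.lift_le.{1}, Cardinal.lift_one]
    exact absurd ((Order.succ_le_iff.1 this).trans_le (one_le_aleph0.trans hlam)) (lt_irrefl _)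
  refine ⟨fun a ha => ⟨(h1 a ha).1, ?_⟩, h2, h3, σ.card, (Cardinal.lt_ord.1 hσ), ?_⟩
  · rw [← Set.nonempty_coe_sort, ← not_isEmpty_iff]
    intro h
    have := (h1 a ha).2
    rw [otpEq] at this
    rw [Ordinal.type_eq_zero_iff_isEmpty.2 h] at this
    refine hσ0 (Ordinal.lift_inj.{1,0}.1 ?_)
    simp only [Ordinal.lift_zero]
    exact this.symm
  · intro a ha
    show #a ≤ Cardinal.lift.{1} σ.card
    rw [← mk_set_eq_card_type a, (h1 a ha).2, ← Ordinal.lift_card]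

end Helpers

section TcFacts
variable {lam : Cardinal.{0}} {c : Ordinal → Ordinal → Ordinal}

lemma Tc_unbounded (hreg : lam.IsRegular)
    (hU : IsU1 (Order.succ lam) lam lam c)
    {𝒜 : Set (Set Ordinal)} (hA : AFam (Order.succ lam) lam 𝒜) :
    ∀ ε < lam.ord, ∃ τ ∈ Tc lam c 𝒜, ε < τ := by
  obtain ⟨h1, h2, h3, ν, hν, hbd⟩ := hA
  have htype : ∀ a ∈ 𝒜, ∃ σ : Ordinal.{0},
      Ordinal.lift.{1} σ = Ordinal.type ((· < ·) : a → a → Prop) ∧ σ < lam.ord := by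
    intro a ha
    have hcard : (Ordinal.type ((· < ·) : a → a → Prop)).card < Cardinal.lift.{1} lam := by
      rw [mk_set_eq_card_type a]
      exact (hbd a ha).trans_lt (Cardinal.lift_lt.2 hν)
    have hlt : Ordinal.type ((· < ·) : a → a → Prop) < Ordinal.lift.{1} lam.ord := by
      rw [Cardinal.lift_ord]
      exact Cardinal.lt_ord.2 hcard
    obtain ⟨σ, hσ⟩ := Ordinal.mem_range_lift_of_le hlt.le
    exact ⟨σ, hσ, by rwa [← Ordinal.lift_lt.{1}, hσ]⟩
  classical
  set O : Set Ordinal → Ordinal := fun a =>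
    if h : ∃ σ : Ordinal.{0},
      Ordinal.lift.{1} σ = Ordinal.type ((· < ·) : a → a → Prop) ∧ σ < lam.ord
    then h.choose else 0 with hO
  have hOspec : ∀ a ∈ 𝒜, Ordinal.lift.{1} (O a) = Ordinal.type ((· < ·) : a → a → Prop)
      ∧ O a < lam.ord := by
    intro a ha
    rw [hO]
    simp only [dif_pos (htype a ha)]
    exact (htype a ha).choose_spec
  set f : ↥𝒜 → ↥(Iio lam.ord) := fun a => ⟨O a.1, (hOspec a.1 a.2).2⟩ with hf
  have hfib : ∃ y, Cardinal.lift.{1} lam < #(f ⁻¹' {y}) := by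
    by_contra h
    push_neg at h
    have hle := Cardinal.mk_le_mk_mul_of_mk_preimage_le f h
    rw [mk_Iio_ord, Cardinal.mul_eq_self (aleph0_le_lift.2 hreg.1)] at hle
    have h2' : #↥𝒜 = Order.succ (Cardinal.lift.{1} lam) := by
      rw [h3, Cardinal.lift_succ]
    rw [h2'] at hle
    exact absurd ((Order.lt_succ _).trans_le hle) (lt_irrefl _)
  obtain ⟨y, hy⟩ := hfib
  set ℬ : Set (Set Ordinal) := {a | a ∈ 𝒜 ∧ O a = y.1} with hℬ
  have hinj : #(f ⁻¹' {y}) ≤ #ℬ := by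
    refine Cardinal.mk_le_of_injective (f := fun x => (⟨x.1.1, x.1.2, ?_⟩ : ↥ℬ)) ?_
    · exact congrArg Subtype.val x.2
    · intro x x' h
      simp only [Subtype.mk.injEq] at h
      exact Subtype.ext (Subtype.ext h)
  have hcardℬ : cardEq ℬ (Order.succ lam) := by
    refine le_antisymm ?_ ?_
    · rw [← h3]
      exact Cardinal.mk_le_mk_of_subset (fun a ha => ha.1)
    · rw [Cardinal.lift_succ]
      exact Order.succ_le_of_lt (hy.trans_le hinj)
  have hKF : KappaFam (Order.succ lam) y.1 ℬ := by
    refine ⟨fun a ha => ⟨(h1 a ha.1).1, ?_⟩, h2.subset (fun a ha => ha.1), hcardℬ⟩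
    rw [otpEq, ← (hOspec a ha.1).1, ha.2]
  intro ε hε
  obtain ⟨a, ha, b, hb, hbel, τ, hετ, hτ, hconst⟩ := hU y.1 y.2 ℬ hKF ε hε
  exact ⟨τ, ⟨hτ, a, ha.1, b, hb.1, hbel, hconst⟩, hετ⟩
end TcFacts

section TcCard
variable {lam : Cardinal.{0}} {c : Ordinal → Ordinal → Ordinal}

lemma Tc_mk_ge (hreg : lam.IsRegular)
    (hU : IsU1 (Order.succ lam) lam lam c)
    {𝒜 : Set (Set Ordinal)} (hA : AFam (Order.succ lam) lam 𝒜) :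
    Cardinal.lift.{1} lam ≤ #(Tc lam c 𝒜) := by
  classical
  have hub := Tc_unbounded hreg hU hA
  set g : ↥(Iio lam.ord) → ↥(Tc lam c 𝒜) :=
    fun ε => ⟨(hub ε.1 ε.2).choose, (hub ε.1 ε.2).choose_spec.1⟩ with hg
  by_contra hcon
  push_neg at hcon
  set S : Cardinal.{1} := ⨆ t : ↥(Tc lam c 𝒜), Cardinal.lift.{1} (t.1.card) with hS
  have hfibs : ∀ t, #(g ⁻¹' {t}) ≤ S := by
    intro t
    have h1 : #(g ⁻¹' {t}) ≤ Cardinal.lift.{1} (t.1.card) := by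
      rw [← Ordinal.mk_Iio_ordinal]
      refine Cardinal.mk_le_of_injective (f := fun x => (⟨x.1.1, ?_⟩ : ↥(Iio t.1))) ?_
      · have h2 : x.1.1 < (g x.1).1 := (hub x.1.1 x.1.2).choose_spec.2
        have h3 : g x.1 = t := x.2
        rwa [h3] at h2
      · intro x x' h
        simp only [Subtype.mk.injEq] at h
        have h' := congrArg Subtype.val h
        exact Subtype.ext (Subtype.ext h')
    exact h1.trans (le_ciSup (Cardinal.bddAbove_range _) t)
  have hSlt : S < Cardinal.lift.{1} lam := by
    refine Cardinal.iSup_lt_of_isRegular (liftReg hreg) hcon (fun t => ?_)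
    exact Cardinal.lift_lt.2 (Cardinal.lt_ord.1 t.2.1)
  have hle := Cardinal.mk_le_mk_mul_of_mk_preimage_le g hfibs
  rw [mk_Iio_ord] at hle
  exact absurd (hle.trans_lt
    (Cardinal.mul_lt_of_lt (aleph0_le_lift.2 hreg.1) hcon hSlt)) (lt_irrefl _)

end TcCard

section Product
variable {lam : Cardinal.{0}} {c : Ordinal → Ordinal → Ordinal}

lemma product_lemma (hreg : lam.IsRegular) {ι : Type 1} [Nonempty ι]
    (hι : #ι < Cardinal.lift.{1} lam)
    (𝒜 : ι → Set (Set Ordinal)) (hA : ∀ i, AFam (Order.succ lam) lam (𝒜 i)) :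
    ∃ 𝒜' : Set (Set Ordinal), AFam (Order.succ lam) lam 𝒜' ∧
      ∀ i, Tc lam c 𝒜' ⊆ Tc lam c (𝒜 i) := by
  classical
  set kappa := Order.succ lam with hkappa
  have hmkA : ∀ i, #(Iio kappa.ord) = #(𝒜 i) := by
    intro i
    rw [mk_Iio_ord, (hA i).2.2.1]
  have e : ∀ i, ↥(Iio kappa.ord) ≃ ↥(𝒜 i) := fun i => Classical.choice (Cardinal.eq.1 (hmkA i))
  set ν : ι → Cardinal.{0} := fun i => (hA i).2.2.2.choose with hνdef
  have hν : ∀ i, ν i < lam ∧ ∀ a ∈ 𝒜 i, cardLE a (ν i) := fun i => (hA i).2.2.2.choose_spec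
  have hbddν : BddAbove (Set.range ν) := ⟨lam, by rintro _ ⟨i, rfl⟩; exact (hν i).1.le⟩
  set ν' : Cardinal.{0} := ⨆ i, ν i with hν'def
  have hν' : ν' < lam := iSup_lt_of_small hreg hι (fun i => (hν i).1)
  obtain ⟨μ₀, hμ₀eq⟩ := Cardinal.mem_range_lift_of_le hι.le
  have hμ₀ : μ₀ < lam := by rwa [← Cardinal.lift_lt.{0,1}, hμ₀eq]
  set aSet : ↥(Iio kappa.ord) → Set Ordinal := fun j => ⋃ i, ((e i j : Set Ordinal)) with haSet
  have haSub : ∀ j, aSet j ⊆ Iio kappa.ord :=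
    fun j => Set.iUnion_subset fun i => ((hA i).1 _ (e i j).2).1
  have haNe : ∀ j, (aSet j).Nonempty := by
    intro j
    obtain ⟨i⟩ := ‹Nonempty ι›
    exact (((hA i).1 _ (e i j).2).2).mono (Set.subset_iUnion (fun i => ((e i j : Set Ordinal))) i)
  have haCard : ∀ j, #(aSet j) ≤ Cardinal.lift.{1} (μ₀ * ν') := by
    intro j
    refine (Cardinal.mk_iUnion_le _).trans ?_
    rw [Cardinal.lift_mul]
    refine mul_le_mul' hμ₀eq.ge ?_
    refine ciSup_le' (fun i => ?_)
    exact ((hν i).2 _ (e i j).2).trans (Cardinal.lift_le.2 (le_ciSup hbddν i))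
  have hνν' : μ₀ * ν' < lam := Cardinal.mul_lt_of_lt hreg.1 hμ₀ hν'
  -- Zorn
  set P : Set (Set ↥(Iio kappa.ord)) :=
    {S | S.Pairwise fun j j' => Disjoint (aSet j) (aSet j')} with hP
  have hchain : ∀ ch ⊆ P, IsChain (· ⊆ ·) ch → ch.Nonempty →
      ∃ ub ∈ P, ∀ s ∈ ch, s ⊆ ub := by
    intro ch hchP hch hchne
    refine ⟨⋃₀ ch, ?_, fun s hs => Set.subset_sUnion_of_mem hs⟩
    intro j hj j' hj' hne
    obtain ⟨s, hs, hjs⟩ := hj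
    obtain ⟨t, ht, hjt⟩ := hj'
    rcases eq_or_ne s t with rfl | hst
    · exact hchP hs hjs hjt hne
    rcases hch hs ht hst with h | h
    · exact hchP ht (h hjs) hjt hne
    · exact hchP hs hjs (h hjt) hne
  obtain ⟨M, -, hM⟩ := zorn_subset_nonempty P hchain ∅ (by simp [hP])
  have hMP : M ∈ P := hM.1
  -- cardinality of M
  have hMcard : Cardinal.lift.{1} kappa ≤ #M := by
    by_contra hcon
    push_neg at hcon
    have hcon' : #↑M ≤ Cardinal.lift.{1} lam := by
      have h0 : #↑M < Cardinal.lift.{1} (Order.succ lam) := hcon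
      rwa [Cardinal.lift_succ, Order.lt_succ_iff] at h0
    set X : Set Ordinal := ⋃ j ∈ M, aSet j with hX
    have hXcard : #X ≤ Cardinal.lift.{1} lam := by
      refine (Cardinal.mk_biUnion_le aSet M).trans ?_
      have h1 : (⨆ j : ↥M, #(aSet j.1)) ≤ Cardinal.lift.{1} lam := by
        rcases isEmpty_or_nonempty ↥M with h | h
        · rw [ciSup_of_empty]
          exact bot_le
        · exact ciSup_le' (fun j => (haCard j.1).trans (Cardinal.lift_le.2 hνν'.le))
      calc #M * (⨆ j : ↥M, #(aSet j.1)) ≤ Cardinal.lift.{1} lam * Cardinal.lift.{1} lam :=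
            mul_le_mul' hcon' h1
        _ = Cardinal.lift.{1} lam := Cardinal.mul_eq_self (aleph0_le_lift.2 hreg.1)
    set B : Set ↥(Iio kappa.ord) := {j | (aSet j ∩ X).Nonempty} with hB
    have hBcard : #B ≤ Cardinal.lift.{1} lam := by
      have hFspec : ∀ j : ↥B, ∃ i : ι, ∃ x : Ordinal, x ∈ (e i j.1 : Set Ordinal) ∧ x ∈ X := by
        intro j
        obtain ⟨x, hx1, hx2⟩ := j.2
        obtain ⟨i, hi⟩ := Set.mem_iUnion.1 hx1
        exact ⟨i, x, hi, hx2⟩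
      choose FI FX hmem hX2 using hFspec
      have hinj : #B ≤ #(↥X × ι) := by
        refine Cardinal.mk_le_of_injective (f := fun j => (⟨FX j, hX2 j⟩, FI j)) ?_
        intro j j' h
        have hx : FX j = FX j' := congrArg (fun z => (z.1 : Ordinal)) h
        have hi : FI j = FI j' := congrArg Prod.snd h
        have hmem1 := hmem j
        have hmem2 := hmem j'
        rw [hx, hi] at hmem1
        have heq : (e (FI j') j.1 : Set Ordinal) = (e (FI j') j'.1 : Set Ordinal) := by
          by_contra hne
          exact Set.disjoint_left.1 ((hA _).2.1 (e _ j.1).2 (e _ j'.1).2 hne) hmem1 hmem2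
        exact Subtype.ext ((e (FI j')).injective (Subtype.ext heq))
      refine hinj.trans ?_
      rw [Cardinal.mk_prod, Cardinal.lift_id, Cardinal.lift_id]
      exact (mul_le_mul' hXcard hι.le).trans_eq (Cardinal.mul_eq_self (aleph0_le_lift.2 hreg.1))
    have hex : ∃ j₀, j₀ ∉ M ∪ B := by
      by_contra hall
      push_neg at hall
      have : (Set.univ : Set ↥(Iio kappa.ord)) ⊆ M ∪ B := fun j _ => hall j
      have hle := (Cardinal.mk_le_mk_of_subset this).trans (Cardinal.mk_union_le M B)
      rw [Cardinal.mk_univ, mk_Iio_ord] at hle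
      have := hle.trans ((add_le_add hcon' hBcard).trans_eq
        (Cardinal.add_eq_self (aleph0_le_lift.2 hreg.1)))
      rw [Cardinal.lift_le] at this
      exact absurd this (Order.lt_succ lam).not_ge
    obtain ⟨j₀, hj₀⟩ := hex
    have hj₀M : j₀ ∉ M := fun h => hj₀ (Or.inl h)
    have hj₀B : j₀ ∉ B := fun h => hj₀ (Or.inr h)
    have hdisj : ∀ j ∈ M, Disjoint (aSet j₀) (aSet j) := by
      intro j hj
      refine Set.disjoint_left.2 (fun x hx hx' => hj₀B ?_)
      exact ⟨x, hx, Set.mem_biUnion hj hx'⟩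
    have hins : insert j₀ M ∈ P :=
      hMP.insert (fun j hj _ => ⟨hdisj j hj, (hdisj j hj).symm⟩)
    have := hM.2 hins (Set.subset_insert j₀ M)
    exact hj₀M (this (Set.mem_insert j₀ M))
  have hMcard' : #M = Cardinal.lift.{1} kappa := by
    refine le_antisymm ?_ hMcard
    have := Cardinal.mk_le_mk_of_subset (Set.subset_univ M)
    rwa [Cardinal.mk_univ, mk_Iio_ord] at this
  have hInj : Set.InjOn aSet M := by
    intro j hj j' hj' h
    by_contra hne
    obtain ⟨x, hx⟩ := haNe j
    exact Set.disjoint_left.1 (hMP hj hj' hne) hx (h ▸ hx)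
  refine ⟨aSet '' M, ⟨?_, ?_, ?_, μ₀ * ν', hνν', ?_⟩, ?_⟩
  · rintro a ⟨j, hj, rfl⟩
    exact ⟨haSub j, haNe j⟩
  · rintro a ⟨j, hj, rfl⟩ b ⟨j', hj', rfl⟩ hne
    have hjj : j ≠ j' := fun h => hne (by rw [h])
    exact hMP hj hj' hjj
  · rw [cardEq, Cardinal.mk_image_eq_of_injOn _ _ hInj, hMcard']
  · rintro a ⟨j, hj, rfl⟩
    exact haCard j
  · intro i τ hτ
    obtain ⟨hτθ, a, ⟨j, hjM, rfl⟩, b, ⟨j', hj'M, rfl⟩, hbel, hconst⟩ := hτ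
    refine ⟨hτθ, (e i j : Set Ordinal), (e i j).2, (e i j' : Set Ordinal), (e i j').2, ?_, ?_⟩
    · intro x hx y hy
      exact hbel x (Set.mem_iUnion.2 ⟨i, hx⟩) y (Set.mem_iUnion.2 ⟨i, hy⟩)
    · have hsub : Set.image2 c ((e i j : Set Ordinal)) ((e i j' : Set Ordinal)) ⊆ {τ} := by
        rw [← hconst]
        exact Set.image2_subset (fun x hx => Set.mem_iUnion.2 ⟨i, hx⟩)
          (fun y hy => Set.mem_iUnion.2 ⟨i, hy⟩)
      have hne : (Set.image2 c ((e i j : Set Ordinal)) ((e i j' : Set Ordinal))).Nonempty :=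
        Set.Nonempty.image2 ((hA i).1 _ (e i j).2).2 ((hA i).1 _ (e i j').2).2
      rw [constOn]
      refine Set.Subset.antisymm hsub ?_
      obtain ⟨z, hz⟩ := hne
      have := hsub hz
      simp only [Set.mem_singleton_iff] at this
      rw [← this]
      exact Set.singleton_subset_iff.2 hz

end Product

section MainParts
variable {lam : Cardinal.{0}} {c : Ordinal → Ordinal → Ordinal}

lemma Fc_uniform (hreg : lam.IsRegular) (hU : IsU1 (Order.succ lam) lam lam c) :
    IsUniformFilter lam lam (Fc (Order.succ lam) lam lam c) := by
  have h0 : ℵ₀ ≤ lam := hreg.1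
  have hord0 : (0 : Ordinal) < lam.ord :=
    Cardinal.lt_ord.2 (by simpa using Cardinal.aleph0_pos.trans_le h0)
  refine ⟨⟨fun T hT => hT.1, ?_, ?_, ?_, ?_⟩, ?_⟩
  · exact ⟨subset_rfl, _, singleton_AFam h0, fun τ hτ => hτ.1⟩
  · rintro ⟨h1, 𝒜, hA, hsub⟩
    obtain ⟨τ, htc, -⟩ := Tc_unbounded hreg hU hA 0 hord0
    exact Set.notMem_empty τ (hsub htc)
  · rintro S ⟨hS1, 𝒜, hA, hsub⟩ T hST hT1
    exact ⟨hT1, 𝒜, hA, hsub.trans hST⟩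
  · intro I hIF hIne hIlt
    haveI : Nonempty ↥I := hIne.to_subtype
    have hch : ∀ T : ↥I, ∃ 𝒜, AFam (Order.succ lam) lam 𝒜 ∧ Tc lam c 𝒜 ⊆ T.1 :=
      fun T => (hIF T.2).2
    choose 𝒜f h𝒜f hsubf using hch
    obtain ⟨𝒜', hA', hTc'⟩ := product_lemma (c := c) hreg (ι := ↥I) hIlt 𝒜f h𝒜f
    refine ⟨?_, 𝒜', hA', ?_⟩
    · obtain ⟨T₀, hT₀⟩ := hIne
      exact (Set.sInter_subset_of_mem hT₀).trans (hIF hT₀).1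
    · intro τ hτ
      rw [Set.mem_sInter]
      intro T hT
      exact hsubf ⟨T, hT⟩ (hTc' ⟨T, hT⟩ hτ)
  · rintro T ⟨hT1, 𝒜, hA, hsub⟩
    refine le_antisymm ?_ ?_
    · exact (Cardinal.mk_le_mk_of_subset hT1).trans_eq (mk_Iio_ord lam)
    · exact (Tc_mk_ge hreg hU hA).trans (Cardinal.mk_le_mk_of_subset hsub)

end MainParts

/-- For a regular uncountable `λ` such that every `λ`-complete uniform filter on
`λ` fails to be weakly `λ`-saturated, `U₁(λ⁺,2,λ,λ)` implies `Pr₁(λ⁺,λ⁺,λ,λ)`. -/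
theorem stmt17 (lam : Cardinal) (hlam : lam.IsRegular)
    (huncb : Cardinal.aleph 0 < lam)
    (hnosat : ∀ F : Set (Set Ordinal), IsUniformFilter lam lam F →
      ∃ ψ : Ordinal → Ordinal, (∀ τ < lam.ord, ψ τ < lam.ord) ∧
        ∀ ξ < lam.ord, FPos F {τ | τ < lam.ord ∧ ψ τ = ξ})
    (hU1 : U1 (Order.succ lam) lam lam) :
    Pr1 (Order.succ lam) lam lam := by
  classical
  obtain ⟨c, hcb, hc⟩ := hU1
  have hord0 : (0 : Ordinal) < lam.ord :=
    Cardinal.lt_ord.2 (by simpa using Cardinal.aleph0_pos.trans_le hlam.1)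
  have hF := Fc_uniform hlam hc
  obtain ⟨ψ, hψb, hψ⟩ := hnosat _ hF
  refine ⟨fun α β => if c α β < lam.ord then ψ (c α β) else 0, ?_, ?_⟩
  · intro α β hab hβ
    show (if c α β < lam.ord then ψ (c α β) else 0) < lam.ord
    by_cases h : c α β < lam.ord
    · rw [if_pos h]; exact hψb _ h
    · rw [if_neg h]; exact hord0
  · intro σ hσ 𝒜 hKF ξ hξ
    have hA := kappaFam_AFam hlam.1 hσ hKF
    have hTcF : Tc lam c 𝒜 ∈ Fc (Order.succ lam) lam lam c :=
      ⟨fun τ hτ => hτ.1, 𝒜, hA, subset_rfl⟩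
    obtain ⟨τ, hτ1, hτ2⟩ := hψ ξ hξ (Tc lam c 𝒜) hTcF
    obtain ⟨hτθ, a, ha, b, hb, hbel, hconst⟩ := hτ2
    refine ⟨a, ha, b, hb, hbel, ?_⟩
    have hcval : ∀ x ∈ a, ∀ y ∈ b, c x y = τ := by
      intro x hx y hy
      have : c x y ∈ Set.image2 c a b := Set.mem_image2_of_mem hx hy
      rw [hconst] at this
      exact this
    have heval : ∀ x ∈ a, ∀ y ∈ b,
        (if c x y < lam.ord then ψ (c x y) else 0) = ξ := by
      intro x hx y hy
      rw [hcval x hx y hy, if_pos hτ1.1]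
      exact hτ1.2
    have hane : (Set.image2 c a b).Nonempty := by rw [hconst]; exact ⟨τ, rfl⟩
    have haN : a.Nonempty := hane.of_image2_left
    have hbN : b.Nonempty := hane.of_image2_right
    rw [constOn]
    refine Set.Subset.antisymm ?_ ?_
    · rintro z ⟨x, hx, y, hy, rfl⟩
      exact heval x hx y hy
    · obtain ⟨x, hx⟩ := haN
      obtain ⟨y, hy⟩ := hbN
      refine Set.singleton_subset_iff.2 ?_
      rw [← heval x hx y hy]
      exact Set.mem_image2_of_mem hx hy
end

section
/- For every ordinal β < κ and every i, the set {α < β : d(α,β) ≤ i} ∪ {β} is closed in the ordinal interval [0, β] (i.e., d is a closed coloring), where d(α,β) := max(im(tr_h(α,β))) is defined from walks along a coherent C-sequence with h(α) := min(C_α) if min(C_α) < μ, else 0. -/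
open Cardinal Set

/-- The coloring `h : κ → κ` given by `h(α) := min(C_α)` if `min(C_α) < μ`, else `0`. -/
noncomputable def hColor (C : Ordinal → Set Ordinal) (μ : Cardinal) (α : Ordinal) : Ordinal :=
  if sInf (C α) < μ.ord then sInf (C α) else 0

/-- The coloring `d(α,β) := max(im(tr_h(α,β)))`, where `im(tr_h(α,β)) = h '' im(tr(α,β))`. -/
noncomputable def dColor (C : Ordinal → Set Ordinal) (μ : Cardinal) (α β : Ordinal) : Ordinal :=
  sSup (hColor C μ '' trIm C α β)

section AuxWalk

private lemma trw_shift (C : Ordinal → Set Ordinal) (δ β : Ordinal) :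
    ∀ n : ℕ, TrW C δ β (n + 1) = TrW C δ (TrW C δ β 1) n := by
  intro n
  induction n with
  | zero => rfl
  | succ n ih =>
      show (if δ < TrW C δ β (n+1) then sInf (C (TrW C δ β (n+1)) ∩ Set.Ici δ) else δ) = _
      rw [ih]; rfl

private lemma cseq_inter_nonempty {κo : Ordinal} {C : Ordinal → Set Ordinal}
    (hC : IsCSeq κo C) (hsucc : ∀ α : Ordinal, C (α + 1) = {0, α})
    {δ e : Ordinal} (he : e < κo) (hδe : δ < e) : (C e ∩ Set.Ici δ).Nonempty := by
  rcases Ordinal.zero_or_succ_or_isSuccLimit e with h0 | ⟨γ, hγ⟩ | hl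
  · exact absurd h0 (by rintro rfl; exact (not_lt_zero (a := δ)) hδe)
  · refine ⟨γ, ?_, ?_⟩
    · rw [← hγ, ← Ordinal.add_one_eq_succ, hsucc]; exact Or.inr rfl
    · have : δ < Order.succ γ := hγ ▸ hδe
      exact Order.lt_succ_iff.mp this
  · by_contra hemp
    rw [Set.not_nonempty_iff_eq_empty] at hemp
    have hsub : C e ⊆ Set.Iio δ := by
      intro x hx
      by_contra hxd
      have hxδ : δ ≤ x := not_lt.mp hxd
      have : x ∈ C e ∩ Set.Ici δ := ⟨hx, hxδ⟩
      rw [hemp] at this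
      exact this
    have h1 : sSup (C e) ≤ δ := csSup_le' (fun x hx => (hsub hx).le)
    have h2 : sSup (Set.Iio e) = e := by
      apply le_antisymm (csSup_le' (fun x hx => hx.le))
      refine le_of_forall_lt (fun c hc => ?_)
      have h3 : c + 1 ∈ Set.Iio e := by
        rw [Set.mem_Iio, Ordinal.add_one_eq_succ]; exact hl.succ_lt hc
      exact lt_of_lt_of_le (Order.lt_succ c |>.trans_eq (Ordinal.add_one_eq_succ c).symm)
        (le_csSup ⟨e, fun x hx => hx.le⟩ h3)
    rw [(hC e he).2.1, h2] at h1
    exact absurd hδe (not_lt.mpr h1)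

private lemma trw_bounds {κo : Ordinal} {C : Ordinal → Set Ordinal}
    (hC : IsCSeq κo C) (hsucc : ∀ α : Ordinal, C (α + 1) = {0, α})
    {δ β : Ordinal} (hδβ : δ ≤ β) (hβ : β < κo) :
    ∀ n, δ ≤ TrW C δ β n ∧ TrW C δ β n ≤ β := by
  intro n
  induction n with
  | zero => exact ⟨hδβ, le_rfl⟩
  | succ n ih =>
      have hstep : TrW C δ β (n+1) =
          if δ < TrW C δ β n then sInf (C (TrW C δ β n) ∩ Set.Ici δ) else δ := rfl
      rw [hstep]
      by_cases h : δ < TrW C δ β n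
      · rw [if_pos h]
        have hne := cseq_inter_nonempty hC hsucc (lt_of_le_of_lt ih.2 hβ) h
        have hmem := csInf_mem hne
        exact ⟨hmem.2, le_of_lt (lt_of_lt_of_le ((hC _ (lt_of_le_of_lt ih.2 hβ)).1 _ hmem.1) ih.2)⟩
      · rw [if_neg h]; exact ⟨le_rfl, hδβ⟩


private lemma trw_reaches {κo : Ordinal} {C : Ordinal → Set Ordinal}
    (hC : IsCSeq κo C) (hsucc : ∀ α : Ordinal, C (α + 1) = {0, α}) :
    ∀ β : Ordinal, β < κo → ∀ δ ≤ β, ∃ n, TrW C δ β n = δ := by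
  intro β
  induction β using Ordinal.induction with
  | _ β ihβ =>
    intro hβ δ hδβ
    rcases eq_or_lt_of_le hδβ with rfl | hlt
    · exact ⟨0, rfl⟩
    · have h1 : TrW C δ β 1 = sInf (C β ∩ Set.Ici δ) := if_pos hlt
      have hne := cseq_inter_nonempty hC hsucc hβ hlt
      have hmem := csInf_mem hne
      have hβ1_lt : TrW C δ β 1 < β := by rw [h1]; exact (hC β hβ).1 _ hmem.1
      have hβ1_ge : δ ≤ TrW C δ β 1 := by rw [h1]; exact hmem.2
      obtain ⟨n, hn⟩ := ihβ _ hβ1_lt (hβ1_lt.trans hβ) δ hβ1_ge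
      exact ⟨n + 1, by rw [trw_shift, hn]⟩

end AuxWalk

private lemma trw_eq_of_good {κo : Ordinal} {C : Ordinal → Set Ordinal}
    (hC : IsCSeq κo C) (hsucc : ∀ α : Ordinal, C (α + 1) = {0, α})
    {δ β α : Ordinal} (hβ : β < κo) (hδβ : δ < β) (h0δ : 0 < δ) (hαδ : α < δ)
    (hρne : ({n : ℕ | TrW C δ β n = δ}).Nonempty)
    (hgood : ∀ n < rho2 C δ β, sSup (C (TrW C δ β n) ∩ Set.Iio δ) < δ →
      sSup (C (TrW C δ β n) ∩ Set.Iio δ) < α) :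
    ∀ n < rho2 C δ β, TrW C α β n = TrW C δ β n := by
  have hstay : ∀ n < rho2 C δ β, δ < TrW C δ β n := by
    intro n hn
    have hne : TrW C δ β n ≠ δ := Nat.notMem_of_lt_sInf hn
    exact lt_of_le_of_ne (trw_bounds hC hsucc hδβ.le hβ n).1 (Ne.symm hne)
  intro n
  induction n with
  | zero => intro _; rfl
  | succ n ih =>
    intro hn1
    have hn : n < rho2 C δ β := Nat.lt_of_succ_lt hn1
    have ihn := ih hn
    set e := TrW C δ β n with he_def
    have hδe : δ < e := hstay n hn
    have he_le : e ≤ β := (trw_bounds hC hsucc hδβ.le hβ n).2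
    have heκ : e < κo := lt_of_le_of_lt he_le hβ
    have hδ_step : TrW C δ β (n+1) = sInf (C e ∩ Set.Ici δ) := if_pos hδe
    have hnext : δ < TrW C δ β (n+1) := hstay (n+1) hn1
    have hα_step : TrW C α β (n+1) = sInf (C e ∩ Set.Ici α) := by
      show (if α < TrW C α β n then sInf (C (TrW C α β n) ∩ Set.Ici α) else α) = _
      rw [ihn, if_pos (hαδ.trans hδe)]
    have hsets : C e ∩ Set.Ici α = C e ∩ Set.Ici δ := by
      apply Set.Subset.antisymm
      · rintro x ⟨hx1, hx2⟩
        refine ⟨hx1, ?_⟩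
        by_contra hxd
        have hxδ : x < δ := not_le.mp hxd
        have hbdd : BddAbove (C e ∩ Set.Iio δ) := ⟨δ, fun y hy => hy.2.le⟩
        have hxle : x ≤ sSup (C e ∩ Set.Iio δ) := le_csSup hbdd ⟨hx1, hxδ⟩
        have hsle : sSup (C e ∩ Set.Iio δ) ≤ δ := csSup_le' (fun y hy => hy.2.le)
        rcases eq_or_lt_of_le hsle with heq | hlt
        · have hδCe : δ ∈ C e := (hC e heκ).2.2 δ hδe h0δ heq
          have : sInf (C e ∩ Set.Ici δ) ≤ δ := csInf_le' ⟨hδCe, Set.self_mem_Ici⟩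
          rw [← hδ_step] at this
          exact absurd hnext (not_lt.mpr this)
        · exact absurd (hx2.trans hxle) (not_le.mpr (hgood n hn hlt))
      · exact fun x hx => ⟨hx.1, le_trans hαδ.le hx.2⟩
    rw [hα_step, hsets, ← hδ_step]

/-- The coloring `d` is closed: for every `β < κ` and every `i`, the set
`{α < β : d(α,β) ≤ i} ∪ {β}` is closed in the ordinal interval `[0,β]`. -/
theorem stmt19 (κ μ : Cardinal) (hreg : κ.IsRegular) (huncb : Cardinal.aleph 0 < κ)
    (hμ : μ ≤ κ) (C : Ordinal → Set Ordinal) (hC : IsCSeq κ.ord C)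
    (hsucc : ∀ α : Ordinal, C (α + 1) = {0, α})
    (hcoh : ∀ α < κ.ord, ∀ δ ∈ accSet (C α), C δ = C α ∩ Set.Iio δ)
    (β : Ordinal) (hβ : β < κ.ord) (i : Ordinal) :
    ∀ δ ≤ β, 0 < δ →
      sSup (({α | α < β ∧ dColor C μ α β ≤ i} ∪ {β}) ∩ Set.Iio δ) = δ →
      δ ∈ {α | α < β ∧ dColor C μ α β ≤ i} ∪ {β} := by

  intro δ hδβ h0δ hsup
  rcases eq_or_lt_of_le hδβ with rfl | hδltβ
  · exact Or.inr rfl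
  -- δ < β : show δ is in the left set
  left
  refine ⟨hδltβ, ?_⟩
  -- the walk from β to δ terminates
  have hρne : ({n : ℕ | TrW C δ β n = δ}).Nonempty :=
    trw_reaches hC hsucc β hβ δ hδβ
  set ρ := rho2 C δ β with hρ_def
  have hρpos : 0 < ρ := by
    have hmem : TrW C δ β ρ = δ := Nat.sInf_mem hρne
    rcases Nat.eq_zero_or_pos ρ with h0 | h
    · rw [h0] at hmem; exact absurd hmem.symm (ne_of_lt hδltβ)
    · exact h
  -- the finite "lambda" bound
  set g : ℕ → Ordinal := fun n => sSup (C (TrW C δ β n) ∩ Set.Iio δ) with hg_def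
  set Λ := (Finset.range ρ).sup (fun n => if g n < δ then g n else 0) with hΛ_def
  have hΛδ : Λ < δ := by
    rw [hΛ_def]
    refine (Finset.sup_lt_iff (by rwa [Ordinal.bot_eq_zero])).mpr (fun n _ => ?_)
    split
    · assumption
    · exact h0δ
  -- pick α in the closure set above Λ
  obtain ⟨α, hαmem, hΛα⟩ :
      ∃ α ∈ ({α | α < β ∧ dColor C μ α β ≤ i} ∪ {β}) ∩ Set.Iio δ, Λ < α := by
    by_contra h
    push_neg at h
    have : sSup (({α | α < β ∧ dColor C μ α β ≤ i} ∪ {β}) ∩ Set.Iio δ) ≤ Λ :=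
      csSup_le' (fun x hx => h x hx)
    rw [hsup] at this
    exact absurd hΛδ (not_lt.mpr this)
  have hαδ : α < δ := hαmem.2
  have hαβ : α < β := hαδ.trans hδltβ
  have hαd : dColor C μ α β ≤ i := by
    rcases hαmem.1 with h | h
    · exact h.2
    · exact absurd (Set.mem_singleton_iff.mp h) (ne_of_lt hαβ)
  -- the goodness condition for α
  have hgood : ∀ n < ρ, sSup (C (TrW C δ β n) ∩ Set.Iio δ) < δ →
      sSup (C (TrW C δ β n) ∩ Set.Iio δ) < α := by
    intro n hn hlt
    have hle : (if g n < δ then g n else 0) ≤ Λ :=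
      Finset.le_sup (f := fun n => if g n < δ then g n else 0) (Finset.mem_range.mpr hn)
    rw [if_pos hlt] at hle
    exact lt_of_le_of_lt hle hΛα
  have heq := trw_eq_of_good hC hsucc hβ hδltβ h0δ hαδ hρne hgood
  -- walk from β to α is at least as long, with the same initial segment
  have hραne : ({n : ℕ | TrW C α β n = α}).Nonempty :=
    trw_reaches hC hsucc β hβ α hαβ.le
  have hρρα : ∀ n < ρ, n < rho2 C α β := by
    intro n hn
    by_contra h
    have h' : rho2 C α β ≤ n := not_lt.mp h
    have hmem : TrW C α β (rho2 C α β) = α := Nat.sInf_mem hραne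
    have hlt' : rho2 C α β < ρ := lt_of_le_of_lt h' hn
    have h1 : TrW C α β (rho2 C α β) = TrW C δ β (rho2 C α β) := heq _ hlt'
    have h2 : δ < TrW C δ β (rho2 C α β) := by
      have hne : TrW C δ β (rho2 C α β) ≠ δ := Nat.notMem_of_lt_sInf hlt'
      exact lt_of_le_of_ne (trw_bounds hC hsucc hδβ hβ _).1 (Ne.symm hne)
    rw [h1] at hmem
    rw [hmem] at h2
    exact absurd (h2.trans hαδ) (lt_irrefl δ)
  -- trIm inclusion
  have hsub : trIm C δ β ⊆ trIm C α β := by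
    rintro x ⟨n, hn, rfl⟩
    exact ⟨n, hρρα n hn, by simpa using heq n hn⟩
  -- conclude via csSup monotonicity
  have hfin : (hColor C μ '' trIm C α β).Finite := by
    have : trIm C α β ⊆ (fun n => TrW C α β n) '' Set.Iio (rho2 C α β) := by
      rintro x ⟨n, hn, rfl⟩; exact ⟨n, hn, rfl⟩
    exact (((Set.finite_Iio _).image _).subset this).image _
  have hne2 : (hColor C μ '' trIm C δ β).Nonempty :=
    ⟨hColor C μ β, ⟨β, ⟨0, hρpos, rfl⟩, rfl⟩⟩
  calc dColor C μ δ β ≤ dColor C μ α β :=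
        csSup_le_csSup hfin.bddAbove hne2 (Set.image_mono hsub)
    _ ≤ i := hαd
end
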